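/- Let k ∈ ℝ³ be nonzero and A a symmetric 3×3 real matrix with Ak = 0. Then there exists T ∈ GL(3,ℝ) such that Tk = (0,0,1)ᵀ and det(T)·(T⁻¹)ᵀ A T⁻¹ is one of: the zero matrix; a·diag(1,1,0) for some a > 0; a·diag(1,−1,0) for some a > 0; or diag(1,0,0). Equivalently, every non-unimodular linear Poisson structure on ℝ³ is isomorphic to one with compatible pair k = (0,0,1)ᵀ and f ∈ {0, a(x²+y²) (a>0), a(x²−y²) (a>0), x²}. -/

import Mathlib

open Matrix

section Aux

/-- Congruence-with-determinant relation on 2×2 real matrices. -/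
def MyRel (C D : Matrix (Fin 2) (Fin 2) ℝ) : Prop :=
  ∃ H : Matrix (Fin 2) (Fin 2) ℝ, IsUnit H.det ∧ Hᵀ * C * H = H.det • D

lemma myRel_trans {C D E : Matrix (Fin 2) (Fin 2) ℝ}
    (h1 : MyRel C D) (h2 : MyRel D E) : MyRel C E := by
  obtain ⟨H₁, hu1, he1⟩ := h1
  obtain ⟨H₂, hu2, he2⟩ := h2
  refine ⟨H₁ * H₂, by rw [Matrix.det_mul]; exact hu1.mul hu2, ?_⟩
  have h : (H₁ * H₂)ᵀ * C * (H₁ * H₂) = H₂ᵀ * (H₁ᵀ * C * H₁) * H₂ := by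
    rw [Matrix.transpose_mul]; noncomm_ring
  rw [h, he1, Matrix.mul_smul, Matrix.smul_mul, he2, smul_smul, Matrix.det_mul]

/-- The four normal forms (2×2 versions). -/
def IsForm (D : Matrix (Fin 2) (Fin 2) ℝ) : Prop :=
  D = 0 ∨ (∃ a : ℝ, 0 < a ∧ D = a • !![1,0;0,1]) ∨
    (∃ a : ℝ, 0 < a ∧ D = a • !![1,0;0,-1]) ∨ D = !![1,0;0,0]

lemma rel_elim (p q r : ℝ) (hp : p ≠ 0) :
    MyRel !![p,q;q,r] !![p, 0; 0, r - q^2/p] := by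
  refine ⟨!![(1:ℝ), -q/p; 0, 1], by rw [Matrix.det_fin_two]; norm_num, ?_⟩
  rw [Matrix.det_fin_two]
  ext i j
  fin_cases i <;> fin_cases j <;>
    simp [Matrix.mul_apply, Matrix.vecHead, Matrix.vecTail, Fin.sum_univ_two] <;>
    field_simp <;> ring

lemma rel_rank1 (p : ℝ) (hp : p ≠ 0) :
    MyRel !![p,0;0,0] !![(1:ℝ),0;0,0] := by
  refine ⟨!![(1:ℝ), 0; 0, p], by rw [Matrix.det_fin_two]; simpa using hp, ?_⟩
  rw [Matrix.det_fin_two]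
  ext i j
  fin_cases i <;> fin_cases j <;>
    simp [Matrix.mul_apply, Matrix.vecHead, Matrix.vecTail, Fin.sum_univ_two]

lemma rel_swap (p q r : ℝ) :
    MyRel !![p,q;q,r] !![-r,-q;-q,-p] := by
  refine ⟨!![(0:ℝ), 1; 1, 0], by rw [Matrix.det_fin_two]; norm_num, ?_⟩
  rw [Matrix.det_fin_two]
  ext i j
  fin_cases i <;> fin_cases j <;>
    simp [Matrix.mul_apply, Matrix.vecHead, Matrix.vecTail, Fin.sum_univ_two]

lemma rel_offdiag (q : ℝ) :
    MyRel !![0,q;q,0] !![-q,0;0,q] := by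
  refine ⟨!![(1:ℝ), 1; -1, 1], by rw [Matrix.det_fin_two]; norm_num, ?_⟩
  rw [Matrix.det_fin_two]
  ext i j
  fin_cases i <;> fin_cases j <;>
    simp [Matrix.mul_apply, Matrix.vecHead, Matrix.vecTail, Fin.sum_univ_two] <;> ring

lemma rel_diag_nondeg (p s : ℝ) (hp : p ≠ 0) (hs : s ≠ 0) :
    ∃ D, IsForm D ∧ MyRel !![p,0;0,s] D := by
  rcases lt_or_gt_of_ne (mul_ne_zero hp hs) with hps | hps
  · set a : ℝ := Real.sqrt (-(p*s)) with ha
    have ha0 : 0 < a := Real.sqrt_pos.mpr (by linarith)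
    have ha2 : a^2 = -(p*s) := Real.sq_sqrt (by linarith)
    refine ⟨a • !![1,0;0,-1], Or.inr (Or.inr (Or.inl ⟨a, ha0, rfl⟩)), ?_⟩
    refine ⟨!![(1:ℝ), 0; 0, p/a],
      by rw [Matrix.det_fin_two]; simp [isUnit_iff_ne_zero, hp, ha0.ne'], ?_⟩
    rw [Matrix.det_fin_two]
    ext i j
    fin_cases i <;> fin_cases j <;>
      simp [Matrix.mul_apply, Matrix.vecHead, Matrix.vecTail, Fin.sum_univ_two,
        smul_eq_mul] <;>
      field_simp <;> rw [ha2] <;> ring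
  · set a : ℝ := Real.sqrt (p*s) with ha
    have ha0 : 0 < a := Real.sqrt_pos.mpr (by linarith)
    have ha2 : a^2 = p*s := Real.sq_sqrt (by linarith)
    refine ⟨a • !![1,0;0,1], Or.inr (Or.inl ⟨a, ha0, rfl⟩), ?_⟩
    refine ⟨!![(1:ℝ), 0; 0, p/a],
      by rw [Matrix.det_fin_two]; simp [isUnit_iff_ne_zero, hp, ha0.ne'], ?_⟩
    rw [Matrix.det_fin_two]
    ext i j
    fin_cases i <;> fin_cases j <;>
      simp [Matrix.mul_apply, Matrix.vecHead, Matrix.vecTail, Fin.sum_univ_two,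
        smul_eq_mul] <;>
      field_simp <;> rw [ha2] <;> ring

lemma rel_diag (p s : ℝ) : ∃ D, IsForm D ∧ MyRel !![p,0;0,s] D := by
  by_cases hp : p = 0
  · by_cases hs : s = 0
    · subst hp; subst hs
      refine ⟨0, Or.inl rfl, 1, by simp, ?_⟩
      have : (!![(0:ℝ),0;0,0]) = (0 : Matrix (Fin 2) (Fin 2) ℝ) := by
        ext i j; fin_cases i <;> fin_cases j <;> simp
      simp [this]
    · subst hp
      have h1 : MyRel !![(0:ℝ),0;0,s] !![-s,0;0,0] := by
        have := rel_swap 0 0 s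
        simpa using this
      exact ⟨!![(1:ℝ),0;0,0], Or.inr (Or.inr (Or.inr rfl)),
        myRel_trans h1 (rel_rank1 (-s) (neg_ne_zero.mpr hs))⟩
  · by_cases hs : s = 0
    · subst hs
      exact ⟨!![(1:ℝ),0;0,0], Or.inr (Or.inr (Or.inr rfl)), rel_rank1 p hp⟩
    · exact rel_diag_nondeg p s hp hs

lemma step2a (p q r : ℝ) (hp : p ≠ 0) : ∃ D, IsForm D ∧ MyRel !![p,q;q,r] D := by
  obtain ⟨D, hD, hrel⟩ := rel_diag p (r - q^2/p)
  exact ⟨D, hD, myRel_trans (rel_elim p q r hp) hrel⟩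

lemma step2 (p q r : ℝ) : ∃ D, IsForm D ∧ MyRel !![p,q;q,r] D := by
  by_cases hp : p ≠ 0
  · exact step2a p q r hp
  push_neg at hp; subst hp
  by_cases hr : r ≠ 0
  · obtain ⟨D, hD, hrel⟩ := step2a (-r) (-q) 0 (neg_ne_zero.mpr hr)
    have h1 : MyRel !![(0:ℝ),q;q,r] !![-r,-q;-q,0] := by
      have := rel_swap 0 q r; simpa using this
    exact ⟨D, hD, myRel_trans h1 hrel⟩
  push_neg at hr; subst hr
  by_cases hq : q = 0
  · subst hq
    refine ⟨0, Or.inl rfl, 1, by simp, ?_⟩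
    have : (!![(0:ℝ),0;0,0]) = (0 : Matrix (Fin 2) (Fin 2) ℝ) := by
      ext i j; fin_cases i <;> fin_cases j <;> simp
    simp [this]
  · obtain ⟨D, hD, hrel⟩ := rel_diag (-q) q
    exact ⟨D, hD, myRel_trans (rel_offdiag q) hrel⟩

lemma exists_T0 (k : Fin 3 → ℝ) (hk : k ≠ 0) :
    ∃ T : Matrix (Fin 3) (Fin 3) ℝ, IsUnit T.det ∧ T.mulVec k = ![0,0,1] := by
  have hex : ∃ i, k i ≠ 0 := by
    by_contra h; push_neg at h; exact hk (funext h)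
  by_cases h2 : k 2 ≠ 0
  · refine ⟨!![1, 0, -k 0 / k 2; 0, 1, -k 1 / k 2; 0, 0, 1 / k 2], ?_, ?_⟩
    · rw [Matrix.det_fin_three]
      simp [Matrix.vecHead, Matrix.vecTail, isUnit_iff_ne_zero, h2]
    · funext i
      fin_cases i <;>
        simp [Matrix.mulVec, dotProduct, Fin.sum_univ_three] <;> field_simp <;> ring
  by_cases h1 : k 1 ≠ 0
  · refine ⟨!![1, -k 0 / k 1, 0; 0, -k 2 / k 1, 1; 0, 1 / k 1, 0], ?_, ?_⟩
    · rw [Matrix.det_fin_three]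
      simp [Matrix.vecHead, Matrix.vecTail, isUnit_iff_ne_zero, h1]
    · funext i
      fin_cases i <;>
        simp [Matrix.mulVec, dotProduct, Fin.sum_univ_three] <;> field_simp <;> ring
  · push_neg at h1 h2
    have h0 : k 0 ≠ 0 := by
      obtain ⟨i, hi⟩ := hex
      fin_cases i <;> simp_all
    refine ⟨!![-k 1 / k 0, 1, 0; -k 2 / k 0, 0, 1; 1 / k 0, 0, 0], ?_, ?_⟩
    · rw [Matrix.det_fin_three]
      simp [Matrix.vecHead, Matrix.vecTail, isUnit_iff_ne_zero, h0]
    · funext i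
      fin_cases i <;>
        simp [Matrix.mulVec, dotProduct, Fin.sum_univ_three] <;> field_simp <;> ring

lemma lift_conj (p q r : ℝ) (H : Matrix (Fin 2) (Fin 2) ℝ) :
    (!![H 0 0, H 1 0, 0; H 0 1, H 1 1, 0; 0, 0, 1] : Matrix (Fin 3) (Fin 3) ℝ)
        * !![p,q,0;q,r,0;0,0,0] * !![H 0 0, H 0 1, 0; H 1 0, H 1 1, 0; 0, 0, 1] =
      !![(Hᵀ * !![p,q;q,r] * H) 0 0, (Hᵀ * !![p,q;q,r] * H) 0 1, 0;
         (Hᵀ * !![p,q;q,r] * H) 1 0, (Hᵀ * !![p,q;q,r] * H) 1 1, 0; 0, 0, 0] := by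
  ext i j
  fin_cases i <;> fin_cases j <;>
    simp [Matrix.mul_apply, Matrix.transpose_apply, Fin.sum_univ_three, Fin.sum_univ_two,
      Matrix.vecHead, Matrix.vecTail] <;> ring

lemma lift_transpose (H : Matrix (Fin 2) (Fin 2) ℝ) :
    (!![H 0 0, H 0 1, 0; H 1 0, H 1 1, 0; 0, 0, 1] : Matrix (Fin 3) (Fin 3) ℝ)ᵀ =
      !![H 0 0, H 1 0, 0; H 0 1, H 1 1, 0; 0, 0, 1] := by
  ext i j
  fin_cases i <;> fin_cases j <;> simp

lemma lift_det (H : Matrix (Fin 2) (Fin 2) ℝ) :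
    (!![H 0 0, H 0 1, 0; H 1 0, H 1 1, 0; 0, 0, 1] : Matrix (Fin 3) (Fin 3) ℝ).det = H.det := by
  rw [Matrix.det_fin_three, Matrix.det_fin_two]
  simp [Matrix.vecHead, Matrix.vecTail]

lemma lift_mulVec (H : Matrix (Fin 2) (Fin 2) ℝ) :
    (!![H 0 0, H 0 1, 0; H 1 0, H 1 1, 0; 0, 0, 1] : Matrix (Fin 3) (Fin 3) ℝ).mulVec ![0,0,1]
      = ![0,0,1] := by
  funext i
  fin_cases i <;> simp [Matrix.mulVec, dotProduct, Fin.sum_univ_three]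

end Aux

/-- For `k ∈ ℝ³` nonzero and `A` a symmetric 3×3 real matrix with
`Ak = 0`, there is `T ∈ GL(3,ℝ)` with `Tk = (0,0,1)ᵀ` such that
`det(T)·(T⁻¹)ᵀ A T⁻¹` is one of `0`, `a·diag(1,1,0)` (`a > 0`), `a·diag(1,−1,0)`
(`a > 0`), or `diag(1,0,0)`; i.e. every non-unimodular linear Poisson structure on
`ℝ³` is isomorphic to one with compatible pair `k = (0,0,1)ᵀ` and
`f ∈ {0, a(x²+y²), a(x²−y²), x²}`. -/
theorem nonunimodular_classification
    (k : Fin 3 → ℝ) (hk : k ≠ 0)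
    (A : Matrix (Fin 3) (Fin 3) ℝ) (hA : A.IsSymm) (hAk : A.mulVec k = 0) :
    ∃ T : Matrix (Fin 3) (Fin 3) ℝ, IsUnit T.det ∧ T.mulVec k = ![0, 0, 1] ∧
      (T.det • ((T⁻¹)ᵀ * A * T⁻¹) = 0 ∨
       (∃ a : ℝ, 0 < a ∧ T.det • ((T⁻¹)ᵀ * A * T⁻¹) = a • Matrix.diagonal ![1, 1, 0]) ∨
       (∃ a : ℝ, 0 < a ∧ T.det • ((T⁻¹)ᵀ * A * T⁻¹) = a • Matrix.diagonal ![1, -1, 0]) ∨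
       T.det • ((T⁻¹)ᵀ * A * T⁻¹) = Matrix.diagonal ![1, 0, 0]) := by
  obtain ⟨T₀, hT₀u, hT₀k⟩ := exists_T0 k hk
  set B : Matrix (Fin 3) (Fin 3) ℝ := T₀.det • ((T₀⁻¹)ᵀ * A * T₀⁻¹) with hBdef
  have hBsymm : Bᵀ = B := by
    rw [hBdef, Matrix.transpose_smul, Matrix.transpose_mul, Matrix.transpose_mul,
      Matrix.transpose_transpose, hA.eq, Matrix.mul_assoc]
  have hkinv : T₀⁻¹.mulVec ![0,0,1] = k := by
    rw [← hT₀k, Matrix.mulVec_mulVec, Matrix.nonsing_inv_mul _ hT₀u, Matrix.one_mulVec]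
  have hBvec : B.mulVec ![0,0,1] = 0 := by
    rw [hBdef, Matrix.smul_mulVec, ← Matrix.mulVec_mulVec, ← Matrix.mulVec_mulVec,
      hkinv, hAk, Matrix.mulVec_zero, smul_zero]
  have hcol : ∀ i, B i 2 = 0 := by
    intro i
    have := congrFun hBvec i
    simpa [Matrix.mulVec, dotProduct, Fin.sum_univ_three] using this
  have hrow : ∀ j, B 2 j = 0 := by
    intro j
    have : Bᵀ 2 j = B 2 j := by rw [hBsymm]
    rw [← this, Matrix.transpose_apply]
    exact hcol j
  have hsym01 : B 1 0 = B 0 1 := by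
    have : Bᵀ 1 0 = B 1 0 := by rw [hBsymm]
    rw [← this, Matrix.transpose_apply]
  have hB : B = !![B 0 0, B 0 1, 0; B 0 1, B 1 1, 0; 0, 0, 0] := by
    ext i j
    fin_cases i <;> fin_cases j <;>
      simp [Matrix.vecHead, Matrix.vecTail, hcol 0, hcol 1, hrow 0, hrow 1, hrow 2, hsym01]
  obtain ⟨D, hD, H, hHu, hHC⟩ := step2 (B 0 0) (B 0 1) (B 1 1)
  set H₂ : Matrix (Fin 3) (Fin 3) ℝ :=
    !![H 0 0, H 0 1, 0; H 1 0, H 1 1, 0; 0, 0, 1] with hH₂def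
  have hH₂det : H₂.det = H.det := lift_det H
  have hH₂u : IsUnit H₂.det := hH₂det ▸ hHu
  have hdH : H.det ≠ 0 := hHu.ne_zero
  refine ⟨H₂⁻¹ * T₀, ?_, ?_, ?_⟩
  · rw [Matrix.det_mul, Matrix.det_nonsing_inv, Ring.inverse_eq_inv']
    exact (hH₂u.inv).mul hT₀u
  · rw [← Matrix.mulVec_mulVec, hT₀k, ← lift_mulVec H, Matrix.mulVec_mulVec,
      Matrix.nonsing_inv_mul _ hH₂u, Matrix.one_mulVec, lift_mulVec]
  · have hTinv : (H₂⁻¹ * T₀)⁻¹ = T₀⁻¹ * H₂ := by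
      rw [Matrix.mul_inv_rev, Matrix.nonsing_inv_nonsing_inv _ hH₂u]
    have massoc : H₂ᵀ * (T₀⁻¹)ᵀ * A * (T₀⁻¹ * H₂)
        = H₂ᵀ * ((T₀⁻¹)ᵀ * A * T₀⁻¹) * H₂ := by noncomm_ring
    have key : (H₂⁻¹ * T₀).det • (((H₂⁻¹ * T₀)⁻¹)ᵀ * A * (H₂⁻¹ * T₀)⁻¹)
        = (H.det)⁻¹ • (H₂ᵀ * B * H₂) := by
      rw [hTinv, Matrix.det_mul, Matrix.det_nonsing_inv, Ring.inverse_eq_inv',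
        Matrix.transpose_mul, massoc, hBdef, hH₂det,
        Matrix.mul_smul, Matrix.smul_mul, smul_smul]
    have key2 : H₂ᵀ * B * H₂ =
        !![(Hᵀ * !![B 0 0, B 0 1; B 0 1, B 1 1] * H) 0 0,
           (Hᵀ * !![B 0 0, B 0 1; B 0 1, B 1 1] * H) 0 1, 0;
           (Hᵀ * !![B 0 0, B 0 1; B 0 1, B 1 1] * H) 1 0,
           (Hᵀ * !![B 0 0, B 0 1; B 0 1, B 1 1] * H) 1 1, 0; 0, 0, 0] := by
      rw [hH₂def, lift_transpose]
      conv_lhs => rw [hB]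
      exact lift_conj (B 0 0) (B 0 1) (B 1 1) H
    rcases hD with h0 | ⟨a, ha, hDe⟩ | ⟨a, ha, hDe⟩ | h1
    · left
      rw [key, key2, hHC, h0, smul_zero]
      ext i j
      fin_cases i <;> fin_cases j <;> simp [Matrix.vecHead, Matrix.vecTail]
    · right; left
      refine ⟨a, ha, ?_⟩
      rw [key, key2, hHC, hDe]
      ext i j
      fin_cases i <;> fin_cases j <;>
        simp [Matrix.diagonal, Matrix.vecHead, Matrix.vecTail, Matrix.smul_apply,
          smul_eq_mul] <;> (try field_simp)
    · right; right; left
      refine ⟨a, ha, ?_⟩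
      rw [key, key2, hHC, hDe]
      ext i j
      fin_cases i <;> fin_cases j <;>
        simp [Matrix.diagonal, Matrix.vecHead, Matrix.vecTail, Matrix.smul_apply,
          smul_eq_mul] <;> (try field_simp)
    · right; right; right
      rw [key, key2, hHC, h1]
      ext i j
      fin_cases i <;> fin_cases j <;>
        simp [Matrix.diagonal, Matrix.vecHead, Matrix.vecTail, Matrix.smul_apply,
          smul_eq_mul] <;> (try field_simp)
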